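/- Fix d > 0. For r > 0 with 81d² > 48r², let y₀⁰(r) = (2/3)·(36r)^{1/3}/Γ + (1/3)·(6/r)^{1/3}·Γ with Γ = (9d + √(81d² − 48r²))^{1/3}, and let J(r) be the Jacobian matrix at the point (0, y₀⁰(r)) of the map (x₀, y₀) ↦ ( −(π/4) r x₀(−4 + x₀² + y₀²), (1/4)(4d − r y₀(−4 + x₀² + y₀²)) ). Then there exists r₀ > 0 such that for all 0 < r < r₀ the matrix J(r) has positive determinant and negative trace; consequently both eigenvalues of J(r) have negative real part. -/

import Mathlib

/-- for small `r > 0` the Jacobian matrix of the averaged map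
of the forced Van der Pol system at `(0, y₀⁰(r))` has positive determinant and
negative trace, hence both of its (complex) eigenvalues have negative real
part. -/
theorem stmt_19 (d : ℝ) (hd : 0 < d) :
    ∃ r₀ > (0 : ℝ), ∀ r : ℝ, 0 < r → r < r₀ → 81 * d ^ 2 > 48 * r ^ 2 →
      let Γ : ℝ := (9 * d + Real.sqrt (81 * d ^ 2 - 48 * r ^ 2)) ^ ((1 : ℝ) / 3)
      let y₀ : ℝ := 2 / 3 * (36 * r) ^ ((1 : ℝ) / 3) / Γ
        + 1 / 3 * (6 / r) ^ ((1 : ℝ) / 3) * Γ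
      let f₁ : ℝ → ℝ → ℝ := fun x y => -(Real.pi / 4) * r * x * (-4 + x ^ 2 + y ^ 2)
      let f₂ : ℝ → ℝ → ℝ := fun x y => 1 / 4 * (4 * d - r * y * (-4 + x ^ 2 + y ^ 2))
      let J : Matrix (Fin 2) (Fin 2) ℝ :=
        !![deriv (fun x => f₁ x y₀) 0, deriv (fun y => f₁ 0 y) y₀;
           deriv (fun x => f₂ x y₀) 0, deriv (fun y => f₂ 0 y) y₀]
      0 < J.det ∧ Matrix.trace J < 0 ∧
        ∀ μ ∈ spectrum ℂ (J.map (fun x : ℝ => (x : ℂ))), μ.re < 0 := by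
  refine ⟨d / 4, by positivity, ?_⟩
  intro r hr hrd hineq Γ y₀ f₁ f₂ J
  -- y₀ > 2
  have hsq : (0:ℝ) ≤ Real.sqrt (81 * d ^ 2 - 48 * r ^ 2) := Real.sqrt_nonneg _
  have hΓ9 : (9 * d) ^ ((1:ℝ)/3) ≤ Γ := by
    apply Real.rpow_le_rpow (by positivity) (by linarith) (by norm_num)
  have hΓpos : 0 < Γ := by
    apply Real.rpow_pos_of_pos; linarith
  have h6r : (0:ℝ) < 6 / r := by positivity
  have hmul : ((6 / r) * (9 * d)) ^ ((1:ℝ)/3) ≤ (6 / r) ^ ((1:ℝ)/3) * Γ := by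
    rw [Real.mul_rpow (le_of_lt h6r) (by positivity)]
    exact mul_le_mul_of_nonneg_left hΓ9 (Real.rpow_nonneg (le_of_lt h6r) _)
  have h216 : (216:ℝ) < (6 / r) * (9 * d) := by
    rw [div_mul_eq_mul_div, lt_div_iff₀ hr]
    nlinarith
  have h6lt : (6:ℝ) < ((6 / r) * (9 * d)) ^ ((1:ℝ)/3) := by
    have h6 : ((216:ℝ)) ^ ((1:ℝ)/3) = 6 := by
      have h216' : ((216:ℝ)) = (6:ℝ) ^ (3:ℕ) := by norm_num
      rw [h216', ← Real.rpow_natCast (6:ℝ) 3, ← Real.rpow_mul (by norm_num)]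
      norm_num
    have := Real.rpow_lt_rpow (by norm_num : (0:ℝ) ≤ 216) h216 (by norm_num : (0:ℝ) < 1/3)
    rwa [h6] at this
  have hy : 2 < y₀ := by
    have h1 : (0:ℝ) ≤ 2 / 3 * (36 * r) ^ ((1:ℝ)/3) / Γ := by positivity
    have h2 : 2 < 1 / 3 * (6 / r) ^ ((1:ℝ)/3) * Γ := by
      have := lt_of_lt_of_le h6lt hmul
      nlinarith
    simp only [y₀]
    linarith
  clear_value y₀
  clear_value Γ
  -- derivatives
  have hA : deriv (fun x => f₁ x y₀) 0 = -(Real.pi / 4) * r * (-4 + y₀ ^ 2) := by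
    have h := ((hasDerivAt_id (0:ℝ)).const_mul (-(Real.pi / 4) * r)).mul
      (((hasDerivAt_pow 2 (0:ℝ)).const_add (-4)).add_const (y₀ ^ 2))
    have h' : HasDerivAt (fun x => f₁ x y₀) (-(Real.pi / 4) * r * (-4 + y₀ ^ 2)) 0 := by
      exact h.congr_deriv (by norm_num)
    exact h'.deriv
  have hB : deriv (fun y => f₁ 0 y) y₀ = 0 := by
    have : (fun y => f₁ 0 y) = fun _ : ℝ => (0:ℝ) := by
      funext y; simp [f₁]
    rw [this, deriv_const]
  have hC : deriv (fun x => f₂ x y₀) 0 = 0 := by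
    have h := (((hasDerivAt_pow 2 (0:ℝ)).const_add (-4)).add_const (y₀ ^ 2)).const_mul
      (r * y₀)
    have h2 := ((h.const_sub (4 * d)).const_mul (1/4 : ℝ))
    have h' : HasDerivAt (fun x => f₂ x y₀) 0 0 := by
      exact h2.congr_deriv (by norm_num)
    exact h'.deriv
  have hD : deriv (fun y => f₂ 0 y) y₀ = r - 3 / 4 * r * y₀ ^ 2 := by
    have hg := ((hasDerivAt_id y₀).const_mul r).mul
      ((hasDerivAt_pow 2 y₀).const_add (-4 + (0:ℝ) ^ 2))
    have h2 := (hg.const_sub (4 * d)).const_mul (1/4 : ℝ)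
    have h' : HasDerivAt (fun y => f₂ 0 y) (r - 3 / 4 * r * y₀ ^ 2) y₀ := by
      exact h2.congr_deriv (by norm_num [id]; ring)
    exact h'.deriv
  set a : ℝ := -(Real.pi / 4) * r * (-4 + y₀ ^ 2) with ha
  set b : ℝ := r - 3 / 4 * r * y₀ ^ 2 with hb
  have hJ : J = !![a, 0; 0, b] := by
    simp only [J, hA, hB, hC, hD]
  have hπ := Real.pi_pos
  have hy4 : 4 < y₀ ^ 2 := by nlinarith
  have hapos : a < 0 := by
    have hp := mul_pos (mul_pos (by positivity : (0:ℝ) < Real.pi / 4) hr) (sub_pos.mpr hy4)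
    rw [ha]; nlinarith [hp]
  have hbpos : b < 0 := by
    have hp := mul_pos hr (show (0:ℝ) < 3 / 4 * y₀ ^ 2 - 1 by linarith)
    rw [hb]; nlinarith [hp]
  refine ⟨?_, ?_, ?_⟩
  · rw [hJ, Matrix.det_fin_two_of]
    have := mul_pos_of_neg_of_neg hapos hbpos
    nlinarith [this]
  · rw [hJ, Matrix.trace_fin_two_of]
    linarith
  · intro μ hμ
    rw [hJ] at hμ
    rw [spectrum.mem_iff, Matrix.isUnit_iff_isUnit_det, isUnit_iff_ne_zero, not_not] at hμ
    rw [Matrix.det_fin_two] at hμ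
    simp [Matrix.algebraMap_matrix_apply, Matrix.map_apply] at hμ
    rcases hμ with h | h <;> rw [sub_eq_zero] at h <;> rw [h]
    · simpa using hapos
    · simpa using hbpos
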